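/- Suppose part (i) of Assumption 1 holds, v is Hölder continuous on 𝕋³ with exponent θ ∈ (1/2,1), and min_{p∈𝕋³} Δ(p,m) ≥ 0. Then for every p ∈ 𝕋³ the operator h(p) has no eigenvalue in (−∞, m); in fact Δ(p,z) > 0 for all p ∈ 𝕋³ and all z < m. -/

import Mathlib

noncomputable section

open MeasureTheory Real Set Filter Topology NNReal ENNReal

/-- We model the 3-torus `𝕋³ = (ℝ/2πℤ)³` by `ℝ³` together with periodicity
hypotheses; the fundamental domain is the cube `(-π, π]³`. -/
abbrev T3 : Type := EuclideanSpace ℝ (Fin 3)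

/-- The fundamental domain `(-π,π]³` of the torus. -/
def cube : Set T3 := {p | ∀ i, p i ∈ Set.Ioc (-Real.pi) Real.pi}

/-- Lebesgue measure on the fundamental domain (= Haar measure of the torus). -/
def μc : Measure T3 := volume.restrict cube

def cube2 : Set (T3 × T3) := cube ×ˢ cube

def μc2 : Measure (T3 × T3) := volume.restrict cube2

/-- A point of the lattice `(2πℤ)³`. -/
def latticeShift (s : Fin 3 → ℤ) : T3 := WithLp.toLp 2 (fun i => 2 * Real.pi * (s i))

/-- A function on `ℝ³` which is `(2πℤ)³`-periodic, i.e. a function on the torus. -/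
def Periodic3 (f : T3 → ℝ) : Prop := ∀ (p : T3) (s : Fin 3 → ℤ), f (p + latticeShift s) = f p

/-- Hölder continuity with exponent `θ` (the class `ℬ(θ)` of the paper). -/
def HolderB {X Y : Type*} [PseudoEMetricSpace X] [PseudoEMetricSpace Y] (θ : ℝ≥0) (f : X → Y) :
    Prop := ∃ C : ℝ≥0, HolderWith C θ f

/-- `i`-th standard basis vector. -/
def eb (i : Fin 3) : T3 := EuclideanSpace.single i 1

/-- Basic standing hypotheses on the data `u, v, w` of the model operator. -/
structure BasicSetup (u v : T3 → ℝ) (w : T3 → T3 → ℝ) : Prop where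
  u_meas : Measurable u
  u_bdd : ∃ C : ℝ, ∀ p, |u p| ≤ C
  u_per : Periodic3 u
  v_mem : MemLp v 2 μc
  v_per : Periodic3 v
  w_cont : Continuous (Function.uncurry w)
  w_bdd : ∃ C : ℝ, ∀ p q, |w p q| ≤ C
  w_symm : ∀ p q, w p q = w q p
  w_per : ∀ (s t : Fin 3 → ℤ) (p q : T3), w (p + latticeShift s) (q + latticeShift t) = w p q

/-- Part (i) of Assumption 1: `w` is symmetric, even, has a unique non-degenerate
minimum at `(0,0)` and all its third order partial derivatives are Hölder continuous
with exponent `θ ∈ (1/2,1)`. -/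
structure Assumption1i (w : T3 → T3 → ℝ) (θ : ℝ≥0) : Prop where
  theta_lb : (1:ℝ)/2 < (θ : ℝ)
  theta_ub : (θ : ℝ) < 1
  w_even : ∀ p q, w (-p) (-q) = w p q
  contDiff : ContDiff ℝ 3 (Function.uncurry w)
  min_le : ∀ p q, w 0 0 ≤ w p q
  uniqueMin : ∀ p ∈ cube, ∀ q ∈ cube, w p q = w 0 0 → p = 0 ∧ q = 0
  nondeg : ∀ x : T3 × T3, x ≠ 0 →
    0 < iteratedFDeriv ℝ 2 (Function.uncurry w) ((0 : T3), (0 : T3)) (fun _ => x)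
  holder3 : HolderB θ (iteratedFDeriv ℝ 3 (Function.uncurry w))

/-- Part (ii) of Assumption 1: the Hessian blocks of `w` at `(0,0)` are `l₁ W` and
`l₂ W` with `W` positive definite, `l₁ > 0`, `l₂ ≠ 0`. -/
structure Assumption1ii (w : T3 → T3 → ℝ) (W : Matrix (Fin 3) (Fin 3) ℝ) (l1 l2 : ℝ) : Prop where
  posdef : W.PosDef
  l1_pos : 0 < l1
  l2_ne : l2 ≠ 0
  hess_pp : ∀ i j, iteratedFDeriv ℝ 2 (Function.uncurry w) ((0 : T3), (0 : T3))
    ![(eb i, (0 : T3)), (eb j, (0 : T3))] = l1 * W i j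
  hess_pq : ∀ i j, iteratedFDeriv ℝ 2 (Function.uncurry w) ((0 : T3), (0 : T3))
    ![(eb i, (0 : T3)), ((0 : T3), eb j)] = l2 * W i j

/-- Assumption 2: `u ∈ C²` is even with a unique non-degenerate minimum at `0`;
`v` is even and Hölder continuous with exponent `θ ∈ (1/2,1)`. -/
structure Assumption2 (u v : T3 → ℝ) (θ : ℝ≥0) : Prop where
  theta_lb : (1:ℝ)/2 < (θ : ℝ)
  theta_ub : (θ : ℝ) < 1
  u_contDiff : ContDiff ℝ 2 u
  u_even : ∀ p, u (-p) = u p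
  u_min : ∀ p, u 0 ≤ u p
  u_uniqueMin : ∀ p ∈ cube, u p = u 0 → p = 0
  u_nondeg : ∀ x : T3, x ≠ 0 → 0 < iteratedFDeriv ℝ 2 u 0 (fun _ => x)
  v_even : ∀ p, v (-p) = v p
  v_holder : HolderB θ v

/-- `m = min w` (under Assumption 1 the minimum value is `w(0,0)`). -/
def mMin (w : T3 → T3 → ℝ) : ℝ := w 0 0

/-- `M = max w`. -/
def MMax (w : T3 → T3 → ℝ) : ℝ := sSup (Set.range (Function.uncurry w))

/-- `m(p) = min_q w(p,q)`. -/
def mLow (w : T3 → T3 → ℝ) (p : T3) : ℝ := sInf (Set.range (w p))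

/-- `M(p) = max_q w(p,q)`. -/
def MUp (w : T3 → T3 → ℝ) (p : T3) : ℝ := sSup (Set.range (w p))

/-- `Λ(p,z) = ∫_{𝕋³} v(t)²/(w(p,t)−z) dt`. -/
def Lam (v : T3 → ℝ) (w : T3 → T3 → ℝ) (p : T3) (z : ℝ) : ℝ :=
  ∫ t in cube, (v t) ^ 2 / (w p t - z)

/-- The Fredholm determinant `Δ(p,z) = u(p) − z − (1/2)∫ v(q)²/(w(p,q)−z) dq`. -/
def Del (u v : T3 → ℝ) (w : T3 → T3 → ℝ) (p : T3) (z : ℝ) : ℝ :=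
  u p - z - (1/2) * Lam v w p z

/-- Part (i) of Assumption 3: `Λ(·,m)` has a unique maximum at `p = 0`. -/
def Assumption3i (v : T3 → ℝ) (w : T3 → T3 → ℝ) : Prop :=
  ∀ p ∈ cube, p ≠ 0 → Lam v w p (mMin w) < Lam v w 0 (mMin w)

/-- Assumption 3: `Λ(·,m)` has a unique maximum at `p = 0`, and
`Λ(0,m) − Λ(p,m) > c|p|²` near `0`. -/
structure Assumption3 (v : T3 → ℝ) (w : T3 → T3 → ℝ) : Prop where
  uniqueMax : Assumption3i v w
  quad : ∃ δ > (0:ℝ), ∃ c > (0:ℝ), ∀ p : T3, p ≠ 0 → ‖p‖ < δ →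
    c * ‖p‖ ^ 2 < Lam v w 0 (mMin w) - Lam v w p (mMin w)

/-- `z` is an eigenvalue of the generalized Friedrichs model `h(p)` acting on
`ℂ ⊕ L²(𝕋³)` (real form): there is a nonzero `(f₀, f₁)` with `f₁ ∈ L²` solving the
eigenvalue equations. -/
def IsEigh (u v : T3 → ℝ) (w : T3 → T3 → ℝ) (p : T3) (z : ℝ) : Prop :=
  ∃ (f₀ : ℝ) (f₁ : T3 → ℝ),
    MemLp f₁ 2 μc ∧
    ¬ (f₀ = 0 ∧ f₁ =ᵐ[μc] 0) ∧
    u p * f₀ + (Real.sqrt 2)⁻¹ * (∫ q in cube, v q * f₁ q) = z * f₀ ∧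
    (∀ᵐ q ∂μc, (Real.sqrt 2)⁻¹ * v q * f₀ + w p q * f₁ q = z * f₁ q)

/-- Complex version: `z ∈ ℂ` is an eigenvalue of `h(p)` on `ℂ ⊕ L²(𝕋³; ℂ)`. -/
def IsEighC (u v : T3 → ℝ) (w : T3 → T3 → ℝ) (p : T3) (z : ℂ) : Prop :=
  ∃ (f₀ : ℂ) (f₁ : T3 → ℂ),
    MemLp f₁ 2 μc ∧
    ¬ (f₀ = 0 ∧ f₁ =ᵐ[μc] 0) ∧
    (u p : ℂ) * f₀ + ((Real.sqrt 2 : ℂ))⁻¹ * (∫ q in cube, (v q : ℂ) * f₁ q) = z * f₀ ∧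
    (∀ᵐ q ∂μc, ((Real.sqrt 2 : ℂ))⁻¹ * (v q : ℂ) * f₀ + (w p q : ℂ) * f₁ q = z * f₁ q)

/-- Complex Fredholm determinant of `h(p)`. -/
def DelC (u v : T3 → ℝ) (w : T3 → T3 → ℝ) (p : T3) (z : ℂ) : ℂ :=
  (u p : ℂ) - z - (1/2 : ℂ) * ∫ q in cube, ((v q : ℂ)) ^ 2 / ((w p q : ℂ) - z)

/-- `(f₀, f₁, f₂)` solves the eigenvalue equations `H f = z f` for the model
operator `H` on `ℂ ⊕ L²(𝕋³) ⊕ L²ₛ((𝕋³)²)` (real form, possibly `f = 0`). -/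
structure IsEigSolH (u₀ : ℝ) (u v : T3 → ℝ) (w : T3 → T3 → ℝ) (z : ℝ)
    (f₀ : ℝ) (f₁ : T3 → ℝ) (f₂ : T3 → T3 → ℝ) : Prop where
  mem1 : MemLp f₁ 2 μc
  mem2 : MemLp (Function.uncurry f₂) 2 μc2
  symm2 : ∀ p q, f₂ p q = f₂ q p
  eq0 : u₀ * f₀ + (∫ q in cube, v q * f₁ q) = z * f₀
  eq1 : ∀ᵐ p ∂μc, v p * f₀ + u p * f₁ p + (∫ q in cube, v q * f₂ p q) = z * f₁ p
  eq2 : ∀ᵐ x ∂μc2,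
    (1/2) * (v x.2 * f₁ x.1 + v x.1 * f₁ x.2) + w x.1 x.2 * f₂ x.1 x.2 = z * f₂ x.1 x.2

/-- `z` is an eigenvalue of the model operator `H`. -/
def IsEigH (u₀ : ℝ) (u v : T3 → ℝ) (w : T3 → T3 → ℝ) (z : ℝ) : Prop :=
  ∃ (f₀ : ℝ) (f₁ : T3 → ℝ) (f₂ : T3 → T3 → ℝ),
    IsEigSolH u₀ u v w z f₀ f₁ f₂ ∧
    ¬ (f₀ = 0 ∧ f₁ =ᵐ[μc] 0 ∧ Function.uncurry f₂ =ᵐ[μc2] 0)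

/-- A family of vectors of `ℂ ⊕ L² ⊕ L²ₛ` (in function form) is linearly independent
modulo almost-everywhere equality. -/
def AEIndep {n : ℕ} (F : Fin n → ℝ × (T3 → ℝ) × (T3 → T3 → ℝ)) : Prop :=
  ∀ c : Fin n → ℝ,
    (∑ i, c i * (F i).1 = 0) →
    ((fun q => ∑ i, c i * (F i).2.1 q) =ᵐ[μc] 0) →
    ((fun x : T3 × T3 => ∑ i, c i * (F i).2.2 x.1 x.2) =ᵐ[μc2] 0) →
    c = 0

/-- The multiplicity of `z` as an eigenvalue of `H`: the largest number of linearly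
independent (mod a.e. equality) solutions of `H f = z f`. -/
def multH (u₀ : ℝ) (u v : T3 → ℝ) (w : T3 → T3 → ℝ) (z : ℝ) : ℕ :=
  sSup {n : ℕ | ∃ F : Fin n → ℝ × (T3 → ℝ) × (T3 → T3 → ℝ),
    (∀ i, IsEigSolH u₀ u v w z (F i).1 (F i).2.1 (F i).2.2) ∧ AEIndep F}

/-- `N(z)`: the number of eigenvalues of `H` below `z`, counted with multiplicity. -/
def Ncount (u₀ : ℝ) (u v : T3 → ℝ) (w : T3 → T3 → ℝ) (z : ℝ) : ℝ≥0∞ :=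
  ∑' x : {x : ℝ // x < z ∧ IsEigH u₀ u v w x}, (multH u₀ u v w x : ℝ≥0∞)

/-- The operator `h(0)` has an `m`-energy resonance. -/
def HasResonance (u v : T3 → ℝ) (w : T3 → T3 → ℝ) : Prop :=
  u 0 ≠ mMin w ∧
  ∃ ψ : T3 → ℝ, Continuous ψ ∧ ψ 0 ≠ 0 ∧
    ∀ q, ψ q = v q / (2 * (u 0 - mMin w)) * ∫ t in cube, v t * ψ t / (w 0 t - mMin w)
def Kc : Set T3 := {p | ∀ i, p i ∈ Set.Icc (-Real.pi) Real.pi}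

lemma cont_apply_t3 (i : Fin 3) : Continuous (fun q : T3 => q i) := by
  simpa using (EuclideanSpace.proj (𝕜 := ℝ) i).continuous

lemma cube_measurable : MeasurableSet cube := by
  have : cube = ⋂ i, (fun q : T3 => q i) ⁻¹' (Set.Ioc (-Real.pi) Real.pi) := by
    ext p; simp [cube, Set.mem_iInter]
  rw [this]
  exact MeasurableSet.iInter fun i => (cont_apply_t3 i).measurable measurableSet_Ioc

lemma cube_subset_Kc : cube ⊆ Kc := fun p hp i => Set.Ioc_subset_Icc_self (hp i)

lemma Kc_closed : IsClosed Kc := by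
  have : Kc = ⋂ i, (fun q : T3 => q i) ⁻¹' (Set.Icc (-Real.pi) Real.pi) := by
    ext p; simp [Kc, Set.mem_iInter]
  rw [this]
  exact isClosed_iInter fun i => isClosed_Icc.preimage (cont_apply_t3 i)

lemma Kc_norm_le {p : T3} (hp : p ∈ Kc) : ‖p‖ ≤ 2 * Real.pi := by
  have h1 : ‖p‖ = Real.sqrt (∑ i, ‖p i‖ ^ 2) := EuclideanSpace.norm_eq p
  have h2 : (∑ i, ‖p i‖ ^ 2) ≤ 3 * Real.pi ^ 2 := by
    have : ∀ i, ‖p i‖ ^ 2 ≤ Real.pi ^ 2 := by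
      intro i
      have := hp i
      have h3 : |p i| ≤ Real.pi := abs_le.2 ⟨this.1, this.2⟩
      calc ‖p i‖ ^ 2 = |p i| ^ 2 := by rw [Real.norm_eq_abs]
        _ ≤ Real.pi ^ 2 := by
          have : (0:ℝ) ≤ |p i| := abs_nonneg _
          nlinarith
    calc (∑ i, ‖p i‖ ^ 2) ≤ ∑ _i : Fin 3, Real.pi ^ 2 := Finset.sum_le_sum fun i _ => this i
      _ = 3 * Real.pi ^ 2 := by simp
  rw [h1]
  have h4 : Real.sqrt (∑ i, ‖p i‖ ^ 2) ≤ Real.sqrt (3 * Real.pi ^ 2) :=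
    Real.sqrt_le_sqrt h2
  refine h4.trans ?_
  rw [show (2:ℝ) * Real.pi = Real.sqrt ((2*Real.pi)^2) by
    rw [Real.sqrt_sq (by positivity)]]
  apply Real.sqrt_le_sqrt
  nlinarith [Real.pi_pos]

lemma Kc_compact : IsCompact Kc := by
  apply Metric.isCompact_of_isClosed_isBounded Kc_closed
  apply (Metric.isBounded_iff_subset_closedBall 0).2
  exact ⟨2 * Real.pi, fun p hp => by simpa [Metric.mem_closedBall] using Kc_norm_le hp⟩

lemma exists_shift (p : T3) : ∃ s : Fin 3 → ℤ, p + latticeShift s ∈ cube := by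
  refine ⟨fun i => ⌊(Real.pi - p i) / (2 * Real.pi)⌋, fun i => ?_⟩
  have hπ : (0:ℝ) < 2 * Real.pi := by positivity
  set k : ℤ := ⌊(Real.pi - p i) / (2 * Real.pi)⌋ with hk
  have h1 : (k : ℝ) ≤ (Real.pi - p i) / (2 * Real.pi) := Int.floor_le _
  have h2 : (Real.pi - p i) / (2 * Real.pi) - 1 < (k:ℝ) := by
    have := Int.sub_one_lt_floor ((Real.pi - p i) / (2 * Real.pi))
    linarith
  have happ : (p + latticeShift (fun i => ⌊(Real.pi - p i) / (2 * Real.pi)⌋)) i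
      = p i + 2 * Real.pi * k := by simp [latticeShift, hk]
  rw [happ]
  have h2' : Real.pi - p i < ((k:ℝ) + 1) * (2 * Real.pi) :=
    (div_lt_iff₀ hπ).1 (by linarith)
  have h1' : (k:ℝ) * (2 * Real.pi) ≤ Real.pi - p i := (le_div_iff₀ hπ).1 h1
  constructor
  · nlinarith
  · nlinarith

lemma latticeShift_zero : latticeShift 0 = 0 := by
  ext i; simp [latticeShift]

lemma quad_lower (w : T3 → T3 → ℝ) (hw : ContDiff ℝ 3 (Function.uncurry w))
    (hmin : ∀ p q, w 0 0 ≤ w p q)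
    (hnd : ∀ x : T3 × T3, x ≠ 0 →
      0 < iteratedFDeriv ℝ 2 (Function.uncurry w) ((0 : T3), (0 : T3)) (fun _ => x)) :
    ∃ c > (0:ℝ), ∃ r > (0:ℝ), ∀ x : T3 × T3, ‖x‖ ≤ r →
      c * ‖x‖ ^ 2 ≤ Function.uncurry w x - w 0 0 := by
  set f := Function.uncurry w with hfdef
  have hf2 : ContDiff ℝ 2 f := hw.of_le (by norm_num)
  set D2 := iteratedFDeriv ℝ 2 f with hD2def
  have h00 : ((0 : T3), (0 : T3)) = (0 : T3 × T3) := rfl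
  -- minimum of the quadratic form on the sphere
  have hQcont : Continuous (fun x : T3 × T3 => D2 0 (fun _ => x)) :=
    (D2 0).cont.comp (continuous_pi fun _ => continuous_id)
  have hsne : (Metric.sphere (0 : T3 × T3) 1).Nonempty :=
    NormedSpace.sphere_nonempty.mpr zero_le_one
  obtain ⟨x₀, hx₀s, hx₀m⟩ :=
    (isCompact_sphere (0 : T3 × T3) 1).exists_isMinOn hsne hQcont.continuousOn
  set lam := D2 0 (fun _ => x₀) with hlamdef
  have hx₀ne : x₀ ≠ 0 := by
    intro h
    have := mem_sphere_zero_iff_norm.1 hx₀s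
    rw [h] at this; simp at this
  have hlam : 0 < lam := by
    have := hnd x₀ hx₀ne
    rwa [h00] at this
  -- quadratic form lower bound
  have hQ : ∀ x : T3 × T3, lam * ‖x‖ ^ 2 ≤ D2 0 (fun _ => x) := by
    intro x
    rcases eq_or_ne x 0 with hx | hx
    · subst hx
      simp only [norm_zero]
      rw [(D2 0).map_coord_zero (0 : Fin 2) (by simp)]
      simp
    · set n := ‖x‖ with hn
      have hn0 : 0 < n := norm_pos_iff.2 hx
      set u := n⁻¹ • x with hu
      have hus : u ∈ Metric.sphere (0 : T3 × T3) 1 := by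
        rw [mem_sphere_zero_iff_norm, hu, norm_smul, norm_inv, Real.norm_eq_abs,
          abs_of_pos hn0, ← hn, inv_mul_cancel₀ hn0.ne']
      have hxu : x = n • u := by
        rw [hu, smul_smul, mul_inv_cancel₀ hn0.ne', one_smul]
      have hexp : D2 0 (fun _ => x) = (n ^ 2) * D2 0 (fun _ => u) := by
        rw [hxu]
        have := (D2 0).map_smul_univ (fun _ : Fin 2 => n) (fun _ => u)
        simp only [Finset.prod_const, Finset.card_univ, Fintype.card_fin] at this
        rw [show (fun _ : Fin 2 => n • u) = (fun i : Fin 2 => (fun _ : Fin 2 => n) i • (fun _ : Fin 2 => u) i) from rfl]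
        rw [this, smul_eq_mul]
      rw [hexp]
      have h2 : lam ≤ D2 0 (fun _ => u) := hx₀m hus
      nlinarith [sq_nonneg n]
  -- continuity of the second derivative
  have hD2cont : Continuous D2 := hw.continuous_iteratedFDeriv (by norm_num)
  obtain ⟨δ, hδ0, hδ⟩ := Metric.continuousAt_iff.1 hD2cont.continuousAt (lam/2) (by linarith)
  set r := δ / 2 with hr
  have hr0 : 0 < r := by positivity
  -- perturbed quadratic form bound
  have hQy : ∀ y : T3 × T3, ‖y‖ ≤ r → ∀ x : T3 × T3,
      (lam/2) * ‖x‖ ^ 2 ≤ D2 y (fun _ => x) := by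
    intro y hy x
    have hdy : dist y 0 < δ := by
      rw [dist_zero_right]; linarith
    have hnear : ‖D2 y - D2 0‖ < lam / 2 := by
      have := hδ hdy
      rwa [dist_eq_norm] at this
    have hb : |D2 y (fun _ => x) - D2 0 (fun _ => x)| ≤ ‖D2 y - D2 0‖ * ‖x‖ ^ 2 := by
      have h := (D2 y - D2 0).le_opNorm (fun _ => x)
      simp only [ContinuousMultilinearMap.sub_apply, Finset.prod_const, Finset.card_univ,
        Fintype.card_fin, Real.norm_eq_abs] at h
      exact h
    have h1 := hQ x
    have h3 := abs_le.1 hb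
    have h4 : ‖D2 y - D2 0‖ * ‖x‖ ^ 2 ≤ (lam/2) * ‖x‖ ^ 2 := by
      apply mul_le_mul_of_nonneg_right hnear.le (sq_nonneg _)
    nlinarith [sq_nonneg ‖x‖]
  -- first derivative vanishes at the minimum
  have hd0 : fderiv ℝ f 0 = 0 := by
    have hloc : IsLocalMin f 0 := Filter.Eventually.of_forall (fun y => hmin y.1 y.2)
    exact hloc.fderiv_eq_zero
  refine ⟨lam/4, by linarith, r, hr0, ?_⟩
  intro x hx
  -- 1-D functions along the segment
  set α := (lam/2) * ‖x‖ ^ 2 with hα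
  have hline : ∀ t : ℝ, HasDerivAt (fun s : ℝ => s • x) x t := by
    intro t
    simpa using (hasDerivAt_id t).smul_const x
  have hfd : Differentiable ℝ f := hf2.differentiable (by norm_num)
  set g1 : ℝ → ℝ := fun t => fderiv ℝ f (t • x) x with hg1def
  have hg : ∀ t : ℝ, HasDerivAt (fun s => f (s • x)) (g1 t) t := by
    intro t
    exact (hfd (t • x)).hasFDerivAt.comp_hasDerivAt t (hline t)
  have hF1 : ContDiff ℝ 1 (fderiv ℝ f) := hf2.fderiv_right (by norm_num)
  have hg1 : ∀ t : ℝ, HasDerivAt g1 (D2 (t • x) (fun _ => x)) t := by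
    intro t
    have hc : HasDerivAt (fun s : ℝ => fderiv ℝ f (s • x))
        (fderiv ℝ (fderiv ℝ f) (t • x) x) t :=
      ((hF1.differentiable one_ne_zero) (t • x)).hasFDerivAt.comp_hasDerivAt t (hline t)
    have := hc.clm_apply (hasDerivAt_const t x)
    simp only [map_zero, add_zero] at this
    have heq : D2 (t • x) (fun _ => x) = fderiv ℝ (fderiv ℝ f) (t • x) x x := by
      rw [hD2def, iteratedFDeriv_two_apply]
    rwa [heq]
  have hsmul_mem : ∀ t ∈ Icc (0:ℝ) 1, ‖t • x‖ ≤ r := by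
    intro t ht
    rw [norm_smul]
    calc ‖t‖ * ‖x‖ ≤ 1 * r := by
          apply mul_le_mul _ hx (norm_nonneg _) zero_le_one
          rw [Real.norm_eq_abs, abs_le]; exact ⟨by linarith [ht.1], ht.2⟩
      _ = r := one_mul r
  -- step 1 : g1 t ≥ α * t on [0,1]
  have step1 : ∀ t ∈ Icc (0:ℝ) 1, α * t ≤ g1 t := by
    have hφderiv : ∀ t : ℝ, HasDerivAt (fun s => g1 s - α * s)
        (D2 (t • x) (fun _ => x) - α) t := by
      intro t
      exact (hg1 t).sub (by simpa using (hasDerivAt_id t).const_mul α)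
    have hφmono : MonotoneOn (fun s => g1 s - α * s) (Icc 0 1) := by
      apply monotoneOn_of_deriv_nonneg (convex_Icc 0 1)
      · exact (Differentiable.continuous (fun t => ((hφderiv t).differentiableAt))).continuousOn
      · intro t _
        exact ((hφderiv t).differentiableAt).differentiableWithinAt
      · intro t ht
        rw [interior_Icc] at ht
        rw [(hφderiv t).deriv]
        have := hQy (t • x) (hsmul_mem t ⟨ht.1.le, ht.2.le⟩) x
        rw [hα]; linarith
    intro t ht
    have h0 : (fun s => g1 s - α * s) 0 ≤ (fun s => g1 s - α * s) t :=
      hφmono ⟨le_refl 0, zero_le_one⟩ ht ht.1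
    have hg10 : g1 0 = 0 := by
      rw [hg1def]; simp [hd0]
    simp only [mul_zero, sub_zero, hg10] at h0
    linarith [h0]
  -- step 2 : g 1 ≥ g 0 + α/2
  have step2 : f 0 + α/2 ≤ f x := by
    have hψderiv : ∀ t : ℝ, HasDerivAt (fun s => f (s • x) - α/2 * s ^ 2)
        (g1 t - α * t) t := by
      intro t
      have h2 : HasDerivAt (fun s : ℝ => α/2 * s ^ 2) (α * t) t := by
        have h := (hasDerivAt_pow 2 t).const_mul (α/2)
        refine h.congr_deriv ?_
        push_cast
        ring
      exact (hg t).sub h2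
    have hψmono : MonotoneOn (fun s => f (s • x) - α/2 * s ^ 2) (Icc 0 1) := by
      apply monotoneOn_of_deriv_nonneg (convex_Icc 0 1)
      · exact (Differentiable.continuous (fun t => ((hψderiv t).differentiableAt))).continuousOn
      · intro t _
        exact ((hψderiv t).differentiableAt).differentiableWithinAt
      · intro t ht
        rw [interior_Icc] at ht
        rw [(hψderiv t).deriv]
        have := step1 t ⟨ht.1.le, ht.2.le⟩
        linarith
    have := hψmono (Set.left_mem_Icc.2 zero_le_one) (Set.right_mem_Icc.2 zero_le_one) zero_le_one
    simp only [zero_smul, one_smul, one_pow, mul_one, mul_zero, sub_zero] at this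
    have hf0 : f (0 : T3 × T3) = w 0 0 := rfl
    norm_num at this
    linarith [this]
  have hf0 : f (0 : T3 × T3) = w 0 0 := rfl
  rw [hα] at step2
  rw [hf0] at step2
  linarith [step2]


lemma uniq_Kc (w : T3 → T3 → ℝ)
    (hper : ∀ (s t : Fin 3 → ℤ) (p q : T3), w (p + latticeShift s) (q + latticeShift t) = w p q)
    (huniq : ∀ p ∈ cube, ∀ q ∈ cube, w p q = w 0 0 → p = 0 ∧ q = 0) :
    ∀ p ∈ Kc, ∀ q ∈ Kc, w p q = w 0 0 → p = 0 ∧ q = 0 := by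
  have main : ∀ p ∈ Kc, ∃ s : Fin 3 → ℤ, p + latticeShift s ∈ cube ∧
      ((p + latticeShift s = 0) → p = 0) := by
    intro p hp
    refine ⟨fun i => if p i = -Real.pi then 1 else 0, ?_, ?_⟩
    · intro i
      by_cases hpi : p i = -Real.pi
      · have : (p + latticeShift fun i => if p i = -Real.pi then 1 else 0) i
            = p i + 2 * Real.pi * 1 := by
          simp [latticeShift, hpi]
        rw [this, hpi]
        constructor
        · linarith [Real.pi_pos]
        · linarith [Real.pi_pos]
      · have : (p + latticeShift fun i => if p i = -Real.pi then 1 else 0) i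
            = p i + 2 * Real.pi * 0 := by
          simp [latticeShift, hpi]
        rw [this]
        have h1 := (hp i).1
        have h2 := (hp i).2
        constructor
        · rcases lt_or_eq_of_le h1 with h | h
          · linarith
          · exact absurd h.symm hpi
        · linarith
    · intro h0
      have hzero : ∀ i, p i = 0 := by
        intro i
        have : (p + latticeShift fun i => if p i = -Real.pi then 1 else 0) i = 0 := by
          rw [h0]; rfl
        by_cases hpi : p i = -Real.pi
        · exfalso
          have he : p i + 2 * Real.pi * 1 = 0 := by
            simpa [latticeShift, hpi] using this
          rw [hpi] at he
          have := Real.pi_pos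
          linarith
        · have he : p i + 2 * Real.pi * 0 = 0 := by
            simpa [latticeShift, hpi] using this
          linarith
      ext i
      exact hzero i
  intro p hp q hq hw
  obtain ⟨s, hs1, hs2⟩ := main p hp
  obtain ⟨t, ht1, ht2⟩ := main q hq
  have : w (p + latticeShift s) (q + latticeShift t) = w 0 0 := by
    rw [hper]; exact hw
  obtain ⟨h1, h2⟩ := huniq _ hs1 _ ht1 this
  exact ⟨hs2 h1, ht2 h2⟩

lemma wq_lower (w : T3 → T3 → ℝ) (hw : ContDiff ℝ 3 (Function.uncurry w))
    (hwc : Continuous (Function.uncurry w))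
    (hmin : ∀ p q, w 0 0 ≤ w p q)
    (hnd : ∀ x : T3 × T3, x ≠ 0 →
      0 < iteratedFDeriv ℝ 2 (Function.uncurry w) ((0 : T3), (0 : T3)) (fun _ => x))
    (hper : ∀ (s t : Fin 3 → ℤ) (p q : T3), w (p + latticeShift s) (q + latticeShift t) = w p q)
    (huniq : ∀ p ∈ cube, ∀ q ∈ cube, w p q = w 0 0 → p = 0 ∧ q = 0) :
    ∃ c > (0:ℝ), ∀ p ∈ Kc, ∀ q ∈ Kc, c * ‖q‖ ^ 2 ≤ w p q - w 0 0 := by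
  obtain ⟨c₀, hc₀, r, hr, hQB⟩ := quad_lower w hw hmin hnd
  have huK := uniq_Kc w hper huniq
  set K2 : Set (T3 × T3) := (Kc ×ˢ Kc) ∩ {x : T3 × T3 | r ≤ ‖x‖} with hK2def
  have hK2c : IsCompact K2 :=
    (Kc_compact.prod Kc_compact).inter_right
      (isClosed_le continuous_const continuous_norm)
  have hpos : ∀ x ∈ K2, 0 < Function.uncurry w x - w 0 0 := by
    rintro ⟨p, q⟩ ⟨⟨hp, hq⟩, hrx⟩
    have h1 : w 0 0 ≤ w p q := hmin p q
    rcases lt_or_eq_of_le h1 with h | h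
    · simpa [Function.uncurry] using sub_pos.2 h
    · exfalso
      obtain ⟨hp0, hq0⟩ := huK p hp q hq h.symm
      have : ((p, q) : T3 × T3) = 0 := by
        rw [hp0, hq0]; rfl
      rw [this] at hrx
      simp at hrx
      linarith
  -- minimum of w − m on the compact K2 (if nonempty)
  obtain ⟨δ, hδ0, hδ⟩ : ∃ δ > (0:ℝ), ∀ x ∈ K2, δ ≤ Function.uncurry w x - w 0 0 := by
    rcases K2.eq_empty_or_nonempty with hK2e | hK2ne
    · exact ⟨1, one_pos, by rw [hK2e]; simp⟩
    · obtain ⟨x₀, hx₀, hmin₀⟩ := hK2c.exists_isMinOn hK2ne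
        ((hwc.sub continuous_const).continuousOn)
      exact ⟨Function.uncurry w x₀ - w 0 0, hpos x₀ hx₀, fun x hx => hmin₀ hx⟩
  refine ⟨min c₀ (δ / (4 * Real.pi ^ 2 + 1)), ?_, ?_⟩
  · have : (0:ℝ) < δ / (4 * Real.pi ^ 2 + 1) := by positivity
    exact lt_min hc₀ this
  intro p hp q hq
  have hq2 : ‖q‖ ^ 2 ≤ 4 * Real.pi ^ 2 := by
    have := Kc_norm_le hq
    nlinarith [norm_nonneg q, Real.pi_pos]
  by_cases hcase : ‖((p, q) : T3 × T3)‖ ≤ r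
  · have h1 := hQB (p, q) hcase
    have h2 : ‖q‖ ≤ ‖((p, q) : T3 × T3)‖ := by
      simpa using norm_snd_le ((p, q) : T3 × T3)
    have h3 : ‖q‖ ^ 2 ≤ ‖((p, q) : T3 × T3)‖ ^ 2 := by
      nlinarith [norm_nonneg q, norm_nonneg ((p, q) : T3 × T3)]
    have h4 : min c₀ (δ / (4 * Real.pi ^ 2 + 1)) * ‖q‖ ^ 2 ≤ c₀ * ‖((p, q) : T3 × T3)‖ ^ 2 := by
      have h5 : min c₀ (δ / (4 * Real.pi ^ 2 + 1)) ≤ c₀ := min_le_left _ _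
      nlinarith [norm_nonneg q, sq_nonneg ‖q‖]
    have : Function.uncurry w (p, q) = w p q := rfl
    nlinarith [h1]
  · push_neg at hcase
    have hx2 : ((p, q) : T3 × T3) ∈ K2 := ⟨⟨hp, hq⟩, hcase.le⟩
    have h1 := hδ _ hx2
    have h5 : min c₀ (δ / (4 * Real.pi ^ 2 + 1)) ≤ δ / (4 * Real.pi ^ 2 + 1) := min_le_right _ _
    have h6 : min c₀ (δ / (4 * Real.pi ^ 2 + 1)) * ‖q‖ ^ 2 ≤ δ := by
      have h7 : (0:ℝ) < 4 * Real.pi ^ 2 + 1 := by positivity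
      have h8 : δ / (4 * Real.pi ^ 2 + 1) * ‖q‖ ^ 2 ≤ δ / (4 * Real.pi ^ 2 + 1) * (4 * Real.pi ^ 2 + 1) := by
        apply mul_le_mul_of_nonneg_left (by nlinarith) (by positivity)
      rw [div_mul_cancel₀ _ h7.ne'] at h8
      nlinarith [sq_nonneg ‖q‖]
    have : Function.uncurry w (p, q) = w p q := rfl
    nlinarith [h1]

lemma oneD_int : IntegrableOn (fun t : ℝ => |t| ^ (-(2:ℝ)/3)) (Set.Ioc (-Real.pi) Real.pi) volume := by
  have I1 : IntervalIntegrable (fun t : ℝ => t ^ (-(2:ℝ)/3)) volume 0 Real.pi :=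
    intervalIntegral.intervalIntegrable_rpow' (by norm_num)
  have I1' : IntervalIntegrable (fun t : ℝ => |t| ^ (-(2:ℝ)/3)) volume 0 Real.pi := by
    rw [intervalIntegrable_iff, uIoc_of_le Real.pi_pos.le] at I1 ⊢
    exact I1.congr_fun (fun t ht => by rw [abs_of_pos ht.1]) measurableSet_Ioc
  have I2 : IntervalIntegrable (fun t : ℝ => |t| ^ (-(2:ℝ)/3)) volume (-Real.pi) 0 := by
    have h := (IntervalIntegrable.iff_comp_neg enorm_ne_top).1 I1'
    simp only [abs_neg, neg_zero] at h
    exact h.symm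
  have I := I2.trans I1'
  rw [intervalIntegrable_iff, uIoc_of_le (by linarith [Real.pi_pos] : -Real.pi ≤ Real.pi)] at I
  exact I

lemma threeD_int : Integrable
    (fun q : T3 => ∏ i, (Set.Ioc (-Real.pi) Real.pi).indicator
      (fun t : ℝ => |t| ^ (-(2:ℝ)/3)) (q i)) volume := by
  have h1 : ∀ _i : Fin 3, Integrable
      ((Set.Ioc (-Real.pi) Real.pi).indicator (fun t : ℝ => |t| ^ (-(2:ℝ)/3))) volume := by
    intro _
    rw [integrable_indicator_iff measurableSet_Ioc]
    exact oneD_int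
  have h2 : Integrable (fun x : Fin 3 → ℝ => ∏ i, (Set.Ioc (-Real.pi) Real.pi).indicator
      (fun t : ℝ => |t| ^ (-(2:ℝ)/3)) (x i)) volume :=
    MeasureTheory.Integrable.fintype_prod (fun i => h1 i)
  have hmp := EuclideanSpace.volume_preserving_symm_measurableEquiv_toLp (Fin 3)
  have h3 := (hmp.integrable_comp_emb
    (MeasurableEquiv.toLp 2 (Fin 3 → ℝ)).symm.measurableEmbedding).2 h2
  exact h3

lemma coord_null (i : Fin 3) : (volume : Measure T3) {q : T3 | q i = 0} = 0 := by
  have hmp := (EuclideanSpace.volume_preserving_symm_measurableEquiv_toLp (Fin 3)).symm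
  have hmeas : MeasurableSet {q : T3 | q i = 0} :=
    (cont_apply_t3 i).measurable (measurableSet_singleton 0)
  have h := hmp.measure_preimage hmeas.nullMeasurableSet
  have hpre : (MeasurableEquiv.toLp 2 (Fin 3 → ℝ)).symm.symm ⁻¹' {q : T3 | q i = 0}
      = {f : Fin 3 → ℝ | f i = 0} := rfl
  rw [hpre] at h
  rw [← h, volume_pi]
  exact MeasureTheory.Measure.pi_hyperplane _ i 0

lemma v_bound (v : T3 → ℝ) (hvc : Continuous v) :
    ∃ B : ℝ, 0 ≤ B ∧ ∀ q ∈ Kc, |v q| ≤ B := by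
  obtain ⟨C, hC⟩ := Kc_compact.exists_bound_of_continuousOn hvc.continuousOn
  exact ⟨max C 0, le_max_right _ _, fun q hq => le_trans (by simpa using hC q hq) (le_max_left _ _)⟩

lemma lam_key (v : T3 → ℝ) (w : T3 → T3 → ℝ)
    (hwc : Continuous (Function.uncurry w))
    (hvc : Continuous v)
    (hwmin : ∀ p q, w 0 0 ≤ w p q)
    (hB : ∃ B : ℝ, 0 ≤ B ∧ ∀ q ∈ Kc, |v q| ≤ B)
    (hlow : ∃ c > (0:ℝ), ∀ p ∈ Kc, ∀ q ∈ Kc, c * ‖q‖ ^ 2 ≤ w p q - w 0 0) :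
    ∃ K : ℝ, 0 ≤ K ∧ ∀ p ∈ Kc,
      IntegrableOn (fun q => v q ^ 2 / (w p q - w 0 0)) cube volume ∧
      (∫ q in cube, v q ^ 2 / (w p q - w 0 0)) ≤ K := by
  obtain ⟨B, hB0, hBb⟩ := hB
  obtain ⟨c, hc, hlow⟩ := hlow
  set F : ℝ → ℝ := fun t => |t| ^ (-(2:ℝ)/3) with hF
  set h : T3 → ℝ := fun q =>
    (B ^ 2 / (3 * c)) * ∏ i, (Set.Ioc (-Real.pi) Real.pi).indicator F (q i) with hh
  have hh_nonneg : ∀ q, 0 ≤ h q := by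
    intro q
    apply mul_nonneg (by positivity)
    apply Finset.prod_nonneg
    intro i _
    apply Set.indicator_nonneg
    intro t _
    positivity
  have hInt : Integrable h volume := threeD_int.const_mul _
  have haeC : ∀ᵐ q ∂(volume.restrict cube), q ∈ cube := ae_restrict_mem cube_measurable
  have haeN : ∀ᵐ q ∂(volume.restrict cube), ∀ i, q i ≠ 0 := by
    rw [MeasureTheory.ae_all_iff]
    intro i
    have h0 : (volume.restrict cube) {q : T3 | q i = 0} = 0 :=
      le_antisymm ((Measure.restrict_apply_le _ _).trans (coord_null i).le) (by simp)
    have hset : {q : T3 | ¬ q i ≠ 0} = {q : T3 | q i = 0} := by ext q; simp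
    rw [ae_iff, hset]
    exact h0
  have key : ∀ p ∈ Kc, ∀ q, q ∈ cube → (∀ i, q i ≠ 0) →
      v q ^ 2 / (w p q - w 0 0) ≤ h q := by
    intro p hp q hqc hqn
    have hqK : q ∈ Kc := cube_subset_Kc hqc
    have hq0 : q ≠ 0 := by
      intro h0
      exact hqn 0 (by rw [h0]; rfl)
    have hqnorm : (0:ℝ) < ‖q‖ := norm_pos_iff.2 hq0
    have hden : (0:ℝ) < c * ‖q‖ ^ 2 := by positivity
    have hwlow := hlow p hp q hqK
    have hv2 : v q ^ 2 ≤ B ^ 2 := by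
      have := hBb q hqK
      nlinarith [abs_nonneg (v q), sq_abs (v q)]
    have step1 : v q ^ 2 / (w p q - w 0 0) ≤ B ^ 2 / (c * ‖q‖ ^ 2) :=
      div_le_div₀ (by positivity) hv2 hden hwlow
    set a : Fin 3 → ℝ := fun i => q i ^ 2 with ha
    have hapos : ∀ i, 0 < a i := fun i =>
      lt_of_le_of_ne (sq_nonneg _) (Ne.symm (pow_ne_zero 2 (hqn i)))
    have hsum : a 0 + a 1 + a 2 = ‖q‖ ^ 2 := by
      rw [EuclideanSpace.norm_eq, Real.sq_sqrt (by positivity)]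
      simp [Fin.sum_univ_three, ha, Real.norm_eq_abs, sq_abs]
    have hgm := Real.geom_mean_le_arith_mean3_weighted (by norm_num : (0:ℝ) ≤ 1/3)
      (by norm_num : (0:ℝ) ≤ 1/3) (by norm_num : (0:ℝ) ≤ 1/3)
      (hapos 0).le (hapos 1).le (hapos 2).le (by norm_num)
    set G := a 0 ^ ((1:ℝ)/3) * a 1 ^ ((1:ℝ)/3) * a 2 ^ ((1:ℝ)/3) with hG
    have hGpos : 0 < G := by
      have h0 := Real.rpow_pos_of_pos (hapos 0) ((1:ℝ)/3)
      have h1 := Real.rpow_pos_of_pos (hapos 1) ((1:ℝ)/3)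
      have h2 := Real.rpow_pos_of_pos (hapos 2) ((1:ℝ)/3)
      positivity
    have hGle : 3 * G ≤ ‖q‖ ^ 2 := by
      rw [← hsum]
      rw [hG]
      linarith [hgm]
    have hind : ∀ i : Fin 3,
        (Set.Ioc (-Real.pi) Real.pi).indicator F (q i) = (a i ^ ((1:ℝ)/3))⁻¹ := by
      intro i
      rw [Set.indicator_of_mem (hqc i)]
      have e1 : F (q i) = (|q i| ^ ((2:ℝ)/3))⁻¹ := by
        show |q i| ^ (-(2:ℝ)/3) = _
        rw [show (-(2:ℝ)/3) = -((2:ℝ)/3) by norm_num, Real.rpow_neg (abs_nonneg _)]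
      have e2 : a i ^ ((1:ℝ)/3) = |q i| ^ ((2:ℝ)/3) := by
        rw [ha]
        show ((q i ^ 2 : ℝ)) ^ ((1:ℝ)/3) = _
        rw [← sq_abs, ← Real.rpow_natCast |q i| 2, ← Real.rpow_mul (abs_nonneg _)]
        norm_num
      rw [e1, e2]
    have hprod : (∏ i, (Set.Ioc (-Real.pi) Real.pi).indicator F (q i)) = G⁻¹ := by
      rw [Fin.prod_univ_three, hind 0, hind 1, hind 2, hG, mul_inv, mul_inv]
    have step2 : B ^ 2 / (c * ‖q‖ ^ 2) ≤ h q := by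
      rw [hh]
      show B ^ 2 / (c * ‖q‖ ^ 2) ≤ B ^ 2 / (3 * c) * ∏ i, (Set.Ioc (-Real.pi) Real.pi).indicator F (q i)
      rw [hprod, ← div_eq_mul_inv, div_div]
      apply div_le_div_of_nonneg_left (by positivity) (by positivity)
      nlinarith [hGle, hc, hGpos]
    exact step1.trans step2
  refine ⟨∫ q in cube, h q, integral_nonneg hh_nonneg, ?_⟩
  intro p hp
  have hgnn : ∀ q, 0 ≤ v q ^ 2 / (w p q - w 0 0) := fun q =>
    div_nonneg (sq_nonneg _) (by linarith [hwmin p q])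
  have hbnd : ∀ᵐ q ∂(volume.restrict cube), v q ^ 2 / (w p q - w 0 0) ≤ h q :=
    (haeC.and haeN).mono (fun q hq => key p hp q hq.1 hq.2)
  have hmeas : AEStronglyMeasurable (fun q => v q ^ 2 / (w p q - w 0 0))
      (volume.restrict cube) := by
    apply Measurable.aestronglyMeasurable
    apply Measurable.div
    · exact (hvc.pow 2).measurable
    · exact ((hwc.comp (Continuous.prodMk_right p)).sub continuous_const).measurable
  constructor
  · exact Integrable.mono' hInt.integrableOn hmeas
      ((haeC.and haeN).mono (fun q hq => by
        rw [Real.norm_eq_abs, abs_of_nonneg (hgnn q)]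
        exact key p hp q hq.1 hq.2))
  · exact integral_mono_of_nonneg (Filter.Eventually.of_forall hgnn) hInt.integrableOn hbnd

/-- if `min_p Δ(p,m) ≥ 0`, then no `h(p)` has an eigenvalue below `m`;
in fact `Δ(p,z) > 0` for all `p` and all `z < m`. -/
theorem no_eigenvalue_below_m_of_min_nonneg
    (u v : T3 → ℝ) (w : T3 → T3 → ℝ) (θ : ℝ≥0)
    (hb : BasicSetup u v w)
    (h1i : Assumption1i w θ)
    (hv : HolderB θ v)
    (hmin : 0 ≤ sInf (Set.range fun p => Del u v w p (mMin w))) :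
    (∀ p : T3, ∀ z < mMin w, 0 < Del u v w p z) ∧
    (∀ p : T3, ∀ z < mMin w, ¬ IsEigh u v w p z) := by
  have hwc := hb.w_cont
  have hvc : Continuous v := by
    obtain ⟨C, hC⟩ := hv
    have hθ : 0 < θ := by
      have h0 : (0:ℝ) < (θ:ℝ) := lt_trans (by norm_num) h1i.theta_lb
      exact_mod_cast h0
    exact hC.continuous hθ
  obtain ⟨c, hc, hlow⟩ := wq_lower w h1i.contDiff hwc h1i.min_le h1i.nondeg hb.w_per h1i.uniqueMin
  obtain ⟨K, hK0, hkey⟩ := lam_key v w hwc hvc h1i.min_le (v_bound v hvc) ⟨c, hc, hlow⟩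
  obtain ⟨Cu, hCu⟩ := hb.u_bdd
  have hmm : mMin w = w 0 0 := rfl
  -- reduction to the fundamental domain
  have hred : ∀ p : T3, ∃ p' : T3, p' ∈ cube ∧ u p' = u p ∧ (∀ q, w p' q = w p q) := by
    intro p
    obtain ⟨s, hs⟩ := exists_shift p
    refine ⟨p + latticeShift s, hs, hb.u_per p s, fun q => ?_⟩
    have h1 := hb.w_per s 0 p q
    rwa [latticeShift_zero, add_zero] at h1
  have hLam_eq : ∀ p p' : T3, (∀ q, w p' q = w p q) → ∀ z, Lam v w p' z = Lam v w p z := by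
    intro p p' hweq z
    unfold Lam
    exact integral_congr_ae (Filter.Eventually.of_forall (fun t => by
      show v t ^ 2 / (w p' t - z) = v t ^ 2 / (w p t - z)
      rw [hweq t]))
  have hLam_nonneg : ∀ p z, z ≤ w 0 0 → 0 ≤ Lam v w p z := by
    intro p z hzm
    unfold Lam
    apply integral_nonneg
    intro t
    apply div_nonneg (sq_nonneg _)
    have := h1i.min_le p t
    linarith
  -- the range of Del (·, m) is bounded below
  have hbdd : BddBelow (Set.range fun p => Del u v w p (mMin w)) := by
    refine ⟨-Cu - |w 0 0| - K / 2, ?_⟩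
    rintro x ⟨p, rfl⟩
    obtain ⟨p', hp'c, hup, hwp⟩ := hred p
    have h1 : Lam v w p (mMin w) = Lam v w p' (mMin w) := (hLam_eq p p' hwp _).symm
    have h3 : Lam v w p' (w 0 0) ≤ K := (hkey p' (cube_subset_Kc hp'c)).2
    have h7 := abs_le.1 (hCu p)
    have h4 := hLam_nonneg p' (w 0 0) le_rfl
    have h8 := le_abs_self (w 0 0)
    show -Cu - |w 0 0| - K / 2 ≤ u p - mMin w - 1/2 * Lam v w p (mMin w)
    rw [h1, hmm]
    linarith [h3, h4, h8, h7.1]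
  have hDel_m_nonneg : ∀ p', 0 ≤ Del u v w p' (mMin w) := fun p' =>
    le_trans hmin (csInf_le hbdd ⟨p', rfl⟩)
  -- a.e. nonvanishing
  have haeC : ∀ᵐ q ∂(volume.restrict cube), q ∈ cube := ae_restrict_mem cube_measurable
  have haeN : ∀ᵐ q ∂(volume.restrict cube), q ≠ 0 := by
    have h0 : (volume.restrict cube) {q : T3 | q = 0} = 0 := by
      refine le_antisymm (le_trans (Measure.restrict_apply_le _ _) ?_) (by simp)
      refine le_trans (measure_mono ?_) (coord_null 0).le
      intro q hq
      rw [Set.mem_setOf_eq] at hq ⊢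
      rw [hq]; rfl
    rw [ae_iff]
    have hset : {q : T3 | ¬ q ≠ 0} = {q : T3 | q = 0} := by ext q; simp
    rw [hset]
    exact h0
  -- Part 1
  have part1 : ∀ p : T3, ∀ z < mMin w, 0 < Del u v w p z := by
    intro p z hz
    obtain ⟨p', hp'c, hup, hwp⟩ := hred p
    have hp'K := cube_subset_Kc hp'c
    have hmono : Lam v w p' z ≤ Lam v w p' (mMin w) := by
      rw [hmm] at hz
      have hm1 : Lam v w p' (mMin w)
          = ∫ q in cube, v q ^ 2 / (w p' q - w 0 0) := rfl
      have hm2 : Lam v w p' z = ∫ q in cube, v q ^ 2 / (w p' q - z) := rfl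
      rw [hm1, hm2]
      apply integral_mono_of_nonneg
      · exact Filter.Eventually.of_forall (fun t => div_nonneg (sq_nonneg _) (by
          have := h1i.min_le p' t
          linarith))
      · exact (hkey p' hp'K).1
      · refine (haeC.and haeN).mono (fun q hq => ?_)
        have hne : w p' q ≠ w 0 0 := by
          intro he
          exact hq.2 (h1i.uniqueMin p' hp'c q hq.1 he).2
        have hgt : w 0 0 < w p' q := lt_of_le_of_ne (h1i.min_le p' q) (Ne.symm hne)
        exact div_le_div_of_nonneg_left (sq_nonneg _) (by linarith) (by linarith)
    have hDelm := hDel_m_nonneg p'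
    have hDeq : Del u v w p z = Del u v w p' z := by
      unfold Del
      rw [hup, hLam_eq p p' hwp z]
    rw [hDeq]
    show 0 < u p' - z - 1/2 * Lam v w p' z
    have hDelm' : 0 ≤ u p' - mMin w - 1/2 * Lam v w p' (mMin w) := hDelm
    linarith [hmono, hz]
  refine ⟨part1, ?_⟩
  intro p z hz hIE
  obtain ⟨f₀, f₁, hmem, hne, heq0, heq1⟩ := hIE
  have hDel := part1 p z hz
  have hden : ∀ q, 0 < w p q - z := fun q => by
    have h1 := h1i.min_le p q
    rw [hmm] at hz
    linarith
  have hform : ∀ᵐ q ∂μc, f₁ q = -((Real.sqrt 2)⁻¹ * v q * f₀) / (w p q - z) := by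
    refine heq1.mono (fun q hq => ?_)
    rw [eq_div_iff (hden q).ne']
    linear_combination hq
  by_cases hf0 : f₀ = 0
  · apply hne
    refine ⟨hf0, ?_⟩
    refine hform.mono (fun q hq => ?_)
    rw [hq, hf0]
    simp
  · have hint : (∫ q in cube, v q * f₁ q) = (-(Real.sqrt 2)⁻¹ * f₀) * Lam v w p z := by
      have h1 : (∫ q in cube, v q * f₁ q)
          = ∫ q in cube, (-(Real.sqrt 2)⁻¹ * f₀) * (v q ^ 2 / (w p q - z)) := by
        apply integral_congr_ae
        have hform' : ∀ᵐ q ∂(volume.restrict cube),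
            f₁ q = -((Real.sqrt 2)⁻¹ * v q * f₀) / (w p q - z) := hform
        refine hform'.mono (fun q hq => ?_)
        show v q * f₁ q = -(Real.sqrt 2)⁻¹ * f₀ * (v q ^ 2 / (w p q - z))
        rw [hq]
        field_simp
      rw [h1, integral_const_mul]
      rfl
    have hs2 : (Real.sqrt 2)⁻¹ * (Real.sqrt 2)⁻¹ = 1/2 := by
      rw [← mul_inv, Real.mul_self_sqrt (by norm_num : (0:ℝ) ≤ 2)]
      norm_num
    rw [hint] at heq0
    have hmain : f₀ * Del u v w p z = 0 := by
      show f₀ * (u p - z - 1/2 * Lam v w p z) = 0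
      linear_combination heq0 + f₀ * Lam v w p z * hs2
    rcases mul_eq_zero.1 hmain with h | h
    · exact hf0 h
    · rw [h] at hDel
      exact lt_irrefl 0 hDel
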